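/- arXiv:0804.0922 — 4 statements merged into one kernel-verified Lean document; each statement's English description precedes it below -/
import Mathlib

section
/- Let A be an algebra, a, b, x, y ∈ A with a, b invertible, λ, q ∈ k nonzero, such that gxg⁻¹ = qx and gyg⁻¹ = q⁻¹y for g = a and g = b, and yx − b x b⁻¹ y = λ(ab − 1) (i.e. the left b-commutator _b[y,x] = λ(ab−1)). Then for every natural number m ≥ 1: y^m x − b^m x b^{-m} y^m = λ (m)_q (q^{m−1} ab − 1) y^{m−1}, where (m)_q = 1 + q + ... + q^{m−1}. -/
/-- Lemma on powers: `_{b^m}[y^m, x] = λ (m)_q (q^{m-1} ab - 1) y^{m-1}`. -/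
theorem power_commutator_rel_one {k A : Type*} [Field k] [CharZero k] [Ring A] [Algebra k A]
    (a b : Aˣ) (x y : A) (q lam : k) (hq : q ≠ 0) (hlam : lam ≠ 0)
    (hax : (a : A) * x * ((a⁻¹ : Aˣ) : A) = q • x)
    (hbx : (b : A) * x * ((b⁻¹ : Aˣ) : A) = q • x)
    (hay : (a : A) * y * ((a⁻¹ : Aˣ) : A) = q⁻¹ • y)
    (hby : (b : A) * y * ((b⁻¹ : Aˣ) : A) = q⁻¹ • y)
    (hc : y * x - ((b : A) * x * ((b⁻¹ : Aˣ) : A)) * y = lam • ((a : A) * (b : A) - 1)) :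
    ∀ m : ℕ, 1 ≤ m →
      y ^ m * x - ((b : A) ^ m * x * ((b⁻¹ : Aˣ) : A) ^ m) * y ^ m
        = (lam * ∑ i ∈ Finset.range m, q ^ i) •
            ((q ^ (m - 1) • ((a : A) * (b : A)) - 1) * y ^ (m - 1)) := by
  set AB : A := (a : A) * (b : A) with hAB
  -- b^m x b^{-m} = q^m • x
  have hbm : ∀ m : ℕ, (b : A) ^ m * x * ((b⁻¹ : Aˣ) : A) ^ m = q ^ m • x := by
    intro m
    induction m with
    | zero => simp
    | succ n ih =>
      have : (b : A) ^ (n + 1) * x * ((b⁻¹ : Aˣ) : A) ^ (n + 1)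
          = (b : A) * ((b : A) ^ n * x * ((b⁻¹ : Aˣ) : A) ^ n) * ((b⁻¹ : Aˣ) : A) := by
        rw [pow_succ' (b : A), pow_succ ((b⁻¹ : Aˣ) : A)]
        noncomm_ring
      rw [this, ih, mul_smul_comm, smul_mul_assoc, hbx, smul_smul, ← pow_succ]
  -- y x = q • (x y) + lam • (AB - 1)
  have hyx : y * x = q • (x * y) + lam • (AB - 1) := by
    have := hc
    rw [hbx, smul_mul_assoc] at this
    linear_combination (norm := noncomm_ring) this
  -- y a = q • (a y), y b = q • (b y)
  have hya : y * (a : A) = q • ((a : A) * y) := by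
    have h1 : (a : A) * y = q⁻¹ • (y * (a : A)) := by
      have := congrArg (· * (a : A)) hay
      simpa [mul_assoc, smul_mul_assoc] using this
    rw [h1, smul_smul, mul_inv_cancel₀ hq, one_smul]
  have hyb : y * (b : A) = q • ((b : A) * y) := by
    have h1 : (b : A) * y = q⁻¹ • (y * (b : A)) := by
      have := congrArg (· * (b : A)) hby
      simpa [mul_assoc, smul_mul_assoc] using this
    rw [h1, smul_smul, mul_inv_cancel₀ hq, one_smul]
  -- y AB = q^2 • (AB y)
  have hyAB : y * AB = (q * q) • (AB * y) := by
    calc y * AB = (y * (a : A)) * (b : A) := by rw [hAB, mul_assoc]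
      _ = q • ((a : A) * (y * (b : A))) := by rw [hya, smul_mul_assoc, mul_assoc]
      _ = (q * q) • (AB * y) := by rw [hyb, mul_smul_comm, smul_smul, hAB, mul_assoc]
  -- key induction
  have key : ∀ n : ℕ, y ^ (n + 1) * x - q ^ (n + 1) • (x * y ^ (n + 1))
      = (lam * ∑ i ∈ Finset.range (n + 1), q ^ i) • ((q ^ n • AB - 1) * y ^ n) := by
    intro n
    induction n with
    | zero => simpa [sub_eq_iff_eq_add'] using hyx
    | succ n ih =>
      have h1 : y ^ (n + 2) * x = y * (y ^ (n + 1) * x) := by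
        rw [pow_succ' y (n + 1), mul_assoc]
      have hIH : y ^ (n + 1) * x
          = q ^ (n + 1) • (x * y ^ (n + 1))
            + (lam * ∑ i ∈ Finset.range (n + 1), q ^ i) • ((q ^ n • AB - 1) * y ^ n) :=
        sub_eq_iff_eq_add'.mp ih
      have h2 : y * (x * y ^ (n + 1))
          = q • (x * y ^ (n + 2)) + lam • (AB * y ^ (n + 1)) - lam • y ^ (n + 1) := by
        calc y * (x * y ^ (n + 1)) = (y * x) * y ^ (n + 1) := by rw [mul_assoc]
          _ = (q • (x * y) + lam • (AB - 1)) * y ^ (n + 1) := by rw [hyx]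
          _ = q • (x * y ^ (n + 2)) + lam • (AB * y ^ (n + 1)) - lam • y ^ (n + 1) := by
              rw [add_mul, smul_mul_assoc, smul_mul_assoc, sub_mul, one_mul, mul_assoc,
                ← pow_succ' y (n + 1), smul_sub]
              abel
      have h3 : y * ((q ^ n • AB - 1) * y ^ n)
          = (q ^ (n + 2)) • (AB * y ^ (n + 1)) - y ^ (n + 1) := by
        calc y * ((q ^ n • AB - 1) * y ^ n) = (y * (q ^ n • AB - 1)) * y ^ n := by
              rw [mul_assoc]
          _ = (q ^ n • (y * AB) - y) * y ^ n := by rw [mul_sub, mul_one, mul_smul_comm]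
          _ = (q ^ (n + 2)) • (AB * (y * y ^ n)) - y * y ^ n := by
              rw [hyAB, smul_smul, sub_mul, smul_mul_assoc, mul_assoc]
              ring_nf
          _ = (q ^ (n + 2)) • (AB * y ^ (n + 1)) - y ^ (n + 1) := by
              rw [← pow_succ' y n]
      have hsum : ∑ i ∈ Finset.range (n + 2), q ^ i
          = (∑ i ∈ Finset.range (n + 1), q ^ i) + q ^ (n + 1) := by
        rw [Finset.sum_range_succ]
      rw [h1, hIH, mul_add, mul_smul_comm, mul_smul_comm, h2, h3, hsum]
      have hexp : ((q ^ (n + 1)) • AB - 1) * y ^ (n + 1)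
          = (q ^ (n + 1)) • (AB * y ^ (n + 1)) - y ^ (n + 1) := by
        rw [sub_mul, one_mul, smul_mul_assoc]
      have hgeo : q * ∑ i ∈ Finset.range (n + 1), q ^ i + 1
          = (∑ i ∈ Finset.range (n + 1), q ^ i) + q ^ (n + 1) := by
        rw [← geom_sum_succ]; exact hsum
      rw [hexp]
      match_scalars <;>
        first
          | ring1
          | linear_combination (lam * q ^ (n + 1)) * hgeo
  intro m hm
  obtain ⟨n, rfl⟩ := Nat.exists_eq_add_of_le hm
  have hsimp : 1 + n - 1 = n := by omega
  rw [hsimp, add_comm 1 n, hbm (n + 1), smul_mul_assoc]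
  exact key n
end

section
/- Let A be an algebra, a, b, x, y ∈ A with a, b invertible, λ, q ∈ k nonzero, such that gxg⁻¹ = qx and gyg⁻¹ = q⁻¹y for g = a and g = b, and _b[y,x] = λ(ab − 1). Then for every natural number m ≥ 1: y x^m − b x^m b⁻¹ y = λ (m)_q x^{m−1} (q^{m−1} ab − 1). -/
/-- Lemma on powers: `_b[y, x^m] = λ (m)_q x^{m-1} (q^{m-1} ab - 1)`. -/
theorem power_commutator_rel_two {k A : Type*} [Field k] [CharZero k] [Ring A] [Algebra k A]
    (a b : Aˣ) (x y : A) (q lam : k) (hq : q ≠ 0) (hlam : lam ≠ 0)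
    (hax : (a : A) * x * ((a⁻¹ : Aˣ) : A) = q • x)
    (hbx : (b : A) * x * ((b⁻¹ : Aˣ) : A) = q • x)
    (hay : (a : A) * y * ((a⁻¹ : Aˣ) : A) = q⁻¹ • y)
    (hby : (b : A) * y * ((b⁻¹ : Aˣ) : A) = q⁻¹ • y)
    (hc : y * x - ((b : A) * x * ((b⁻¹ : Aˣ) : A)) * y = lam • ((a : A) * (b : A) - 1)) :
    ∀ m : ℕ, 1 ≤ m →
      y * x ^ m - ((b : A) * x ^ m * ((b⁻¹ : Aˣ) : A)) * y
        = (lam * ∑ i ∈ Finset.range m, q ^ i) •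
            (x ^ (m - 1) * (q ^ (m - 1) • ((a : A) * (b : A)) - 1)) := by
  -- x commutes with a and b up to q
  have ha' : (a : A) * x = q • (x * (a : A)) := by
    have h := congrArg (· * (a : A)) hax
    simpa [mul_assoc, Units.inv_mul, smul_mul_assoc] using h
  have hb' : (b : A) * x = q • (x * (b : A)) := by
    have h := congrArg (· * (b : A)) hbx
    simpa [mul_assoc, Units.inv_mul, smul_mul_assoc] using h
  -- ab commutes with x up to q^2
  have hAB : ((a : A) * (b : A)) * x = (q * q) • (x * ((a : A) * (b : A))) := by
    calc ((a : A) * (b : A)) * x = (a : A) * ((b : A) * x) := by rw [mul_assoc]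
      _ = q • ((a : A) * x * (b : A)) := by rw [hb', mul_smul_comm, mul_assoc]
      _ = (q * q) • (x * ((a : A) * (b : A))) := by
          rw [ha', smul_mul_assoc, smul_smul, mul_assoc]
  -- ab commutes with x^m up to q^(2m)
  have hABpow : ∀ m : ℕ, ((a : A) * (b : A)) * x ^ m
      = ((q * q) ^ m) • (x ^ m * ((a : A) * (b : A))) := by
    intro m
    induction m with
    | zero => simp
    | succ m ih =>
      calc ((a : A) * (b : A)) * x ^ (m + 1)
          = (((a : A) * (b : A)) * x ^ m) * x := by rw [pow_succ, ← mul_assoc]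
        _ = ((q * q) ^ m) • (x ^ m * (((a : A) * (b : A)) * x)) := by
            rw [ih, smul_mul_assoc, mul_assoc]
        _ = ((q * q) ^ (m + 1)) • (x ^ (m + 1) * ((a : A) * (b : A))) := by
            rw [hAB, mul_smul_comm, smul_smul, ← pow_succ, ← mul_assoc, ← pow_succ]
  -- b x^m b⁻¹ = q^m • x^m
  have hpow : ∀ m : ℕ, (b : A) * x ^ m * ((b⁻¹ : Aˣ) : A) = q ^ m • x ^ m := by
    intro m
    induction m with
    | zero => simp
    | succ m ih =>
      have e : (b : A) * x ^ (m + 1) * ((b⁻¹ : Aˣ) : A)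
          = ((b : A) * x ^ m * ((b⁻¹ : Aˣ) : A)) * ((b : A) * x * ((b⁻¹ : Aˣ) : A)) := by
        simp [pow_succ, mul_assoc, Units.inv_mul_cancel_left]
      rw [e, ih, hbx, smul_mul_assoc, mul_smul_comm, smul_smul, ← pow_succ, ← pow_succ]
  -- base relation
  have hyx : y * x = q • (x * y) + lam • ((a : A) * (b : A) - 1) := by
    rw [hbx, smul_mul_assoc, sub_eq_iff_eq_add] at hc
    rw [hc, add_comm]
  -- main induction
  suffices H : ∀ n : ℕ, y * x ^ (n + 1) - (q ^ (n + 1) • x ^ (n + 1)) * y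
      = (lam * ∑ i ∈ Finset.range (n + 1), q ^ i) •
          (x ^ n * (q ^ n • ((a : A) * (b : A)) - 1)) by
    intro m hm
    obtain ⟨n, rfl⟩ : ∃ n, m = n + 1 := ⟨m - 1, (Nat.succ_pred_eq_of_pos hm).symm⟩
    simpa [hpow] using H n
  intro n
  induction n with
  | zero => simpa using sub_eq_iff_eq_add'.mpr hyx
  | succ n ih =>
    have hS : q * (∑ i ∈ Finset.range (n + 1), q ^ i) + 1
        = (∑ i ∈ Finset.range (n + 1), q ^ i) + q ^ (n + 1) := by
      rw [← geom_sum_succ, geom_sum_succ']; ring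
    rw [sub_eq_iff_eq_add] at ih
    have e : y * x ^ (n + 1 + 1) = (y * x) * x ^ (n + 1) := by
      rw [mul_assoc, ← pow_succ']
    rw [sub_eq_iff_eq_add, e, hyx, add_mul, smul_mul_assoc, mul_assoc, ih]
    rw [show (∑ i ∈ Finset.range (n + 1 + 1), q ^ i)
        = (∑ i ∈ Finset.range (n + 1), q ^ i) + q ^ (n + 1) from Finset.sum_range_succ _ _]
    rw [show (lam • ((a : A) * (b : A) - 1)) * x ^ (n + 1)
        = lam • ((((a : A) * (b : A)) * x ^ (n + 1)) - x ^ (n + 1)) from by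
          rw [smul_mul_assoc, sub_mul, one_mul], hABpow]
    have hxx' : x * x ^ n = x ^ n * x := by rw [← pow_succ, ← pow_succ']
    have hxx : ∀ z : A, x * (x ^ n * z) = x ^ n * (x * z) := fun z => by
      rw [← mul_assoc, hxx', mul_assoc]
    simp only [mul_add, add_mul, sub_mul, mul_sub, smul_add, smul_sub, smul_mul_assoc,
      mul_smul_comm, smul_smul, mul_assoc, pow_succ, one_mul, mul_one, hxx, hxx']
    match_scalars <;> first
      | ring1
      | linear_combination lam * hS
      | linear_combination (-lam) * hS
end

section
/- Under the hypotheses of the rank-one commutation setup (gxg⁻¹ = qx, gyg⁻¹ = q⁻¹y for g = a, b invertible, and _b[y,x] = λ(ab−1)), for all positive integers j and k one has _{b^j}[y^j, x^k] = Σ_{i=1}^{min(j,k)} x^{k−i} f_i^{j,k} y^{j−i}, where f_i^{j,k} = λ^i · binom(j,i)_q · binom(k,i)_q · (i)_q! · q^{(k−i)(j−i)} · Π_{m=1}^{i} (q^{j+k−m−i} ab − 1), with binom(n,m)_q the Gaussian binomial coefficient and (i)_q! the q-factorial. -/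
/-- The `q`-integer `(n)_q = 1 + q + ... + q^{n-1}`. -/
def qint {k : Type*} [Field k] (q : k) (n : ℕ) : k := ∑ i ∈ Finset.range n, q ^ i

/-- The `q`-factorial `(n)_q! = (1)_q (2)_q ⋯ (n)_q`. -/
def qfact {k : Type*} [Field k] (q : k) : ℕ → k
  | 0 => 1
  | n + 1 => qfact q n * qint q (n + 1)

/-- The Gaussian `q`-binomial coefficient, via the `q`-Pascal rule. -/
def qbinom {k : Type*} [Field k] (q : k) : ℕ → ℕ → k
  | _, 0 => 1
  | 0, _ + 1 => 0
  | n + 1, m + 1 => qbinom q n m + q ^ (m + 1) * qbinom q n (m + 1)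

section scalars
variable {k : Type*} [Field k] (q : k)

lemma qint_succ (n : ℕ) : qint q (n + 1) = qint q n + q ^ n := Finset.sum_range_succ _ _

lemma qint_add (a b : ℕ) : qint q (a + b) = qint q a + q ^ a * qint q b := by
  induction b with
  | zero => simp [qint]
  | succ b ih => rw [← Nat.add_assoc, qint_succ, ih, qint_succ, mul_add, pow_add]; ring

lemma qbinom_zero_right (n : ℕ) : qbinom q n 0 = 1 := by cases n <;> rfl

lemma qbinom_eq_zero : ∀ (n m : ℕ), n < m → qbinom q n m = 0
  | 0, m + 1, _ => rfl
  | n + 1, m + 1, h => by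
      rw [qbinom, qbinom_eq_zero n m (by omega), qbinom_eq_zero n (m+1) (by omega)]; ring

lemma qbinom_self : ∀ n : ℕ, qbinom q n n = 1
  | 0 => rfl
  | n + 1 => by rw [qbinom, qbinom_self n, qbinom_eq_zero q n (n+1) (by omega)]; ring

lemma qint_succ' (n : ℕ) : qint q (n + 1) = 1 + q * qint q n := by
  have := qint_add q 1 n
  simpa [qint, Nat.add_comm] using this

lemma qbinom_one (n : ℕ) : qbinom q n 1 = qint q n := by
  induction n with
  | zero => simp [qbinom, qint]
  | succ n ih => rw [qbinom, qbinom_zero_right, ih, qint_succ']; ring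

end scalars

section scalars2
variable {k : Type*} [Field k] (q : k)

lemma qbinom_pascal' : ∀ (n m : ℕ),
    qbinom q (n+1) (m+1) = q ^ (n - m) * qbinom q n m + qbinom q n (m+1)
  | 0, 0 => by simp [qbinom]
  | 0, m+1 => by simp [qbinom]
  | n+1, 0 => by
      rw [qbinom_one, qbinom_one, qbinom_zero_right, Nat.sub_zero, qint_succ, pow_succ]; ring
  | n+1, m+1 => by
      rcases Nat.lt_or_ge m n with h | h
      · obtain ⟨d, rfl⟩ : ∃ d, n = m + 1 + d := ⟨n - m - 1, by omega⟩
        have h0 : qbinom q (m+1+d+1+1) (m+1+1)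
            = qbinom q (m+1+d+1) (m+1) + q^(m+1+1) * qbinom q (m+1+d+1) (m+1+1) := rfl
        have hd1 : qbinom q (m+1+d+1) (m+1)
            = qbinom q (m+1+d) m + q^(m+1) * qbinom q (m+1+d) (m+1) := rfl
        have hd2 : qbinom q (m+1+d+1) (m+1+1)
            = qbinom q (m+1+d) (m+1) + q^(m+1+1) * qbinom q (m+1+d) (m+1+1) := rfl
        have h1 := qbinom_pascal' (m+1+d) m
        have h2 := qbinom_pascal' (m+1+d) (m+1)
        rw [show m + 1 + d - m = d + 1 by omega] at h1
        rw [show m + 1 + d - (m+1) = d by omega] at h2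
        rw [show m + 1 + d + 1 - (m + 1) = d + 1 by omega]
        linear_combination h0 + h1 - q^(d+1) * hd1 + q^(m+1+1) * h2 - hd2
      · rcases Nat.lt_or_ge n m with h2 | h2
        · rw [qbinom_eq_zero q (n+1+1) (m+1+1) (by omega),
            qbinom_eq_zero q (n+1) (m+1) (by omega),
            qbinom_eq_zero q (n+1) (m+1+1) (by omega)]
          ring
        · have hnm : n = m := le_antisymm h h2
          subst hnm
          rw [qbinom_self, qbinom_self, qbinom_eq_zero q (n+1) (n+1+1) (by omega)]
          simp
end scalars2

section scalars3
variable {k : Type*} [Field k] (q : k)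

/-- `(i+1)_q B(n, i+1) = (n-i)_q B(n, i)`. -/
lemma qbinom_absorb : ∀ (n i : ℕ), qint q (i+1) * qbinom q n (i+1) = qint q (n-i) * qbinom q n i
  | 0, i => by
      rw [qbinom_eq_zero q 0 (i+1) (by omega), Nat.zero_sub]
      simp [qint]
  | n+1, 0 => by
      rw [qbinom_one, qbinom_zero_right, Nat.sub_zero]
      simp [qint]
  | n+1, i+1 => by
      rcases Nat.lt_or_ge i n with h | h
      · have hd1 : qbinom q (n+1) (i+1+1)
            = qbinom q n (i+1) + q^(i+1+1) * qbinom q n (i+1+1) := rfl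
        have hd2 : qbinom q (n+1) (i+1)
            = qbinom q n i + q^(i+1) * qbinom q n (i+1) := rfl
        have h1 := qbinom_absorb n i
        have h2 := qbinom_absorb n (i+1)
        rw [show n - i = (n-i-1) + 1 by omega] at h1
        rw [show n - (i+1) = n-i-1 by omega] at h2
        rw [show n + 1 - (i+1) = (n-i-1) + 1 by omega]
        have e1 : qint q (i+1+1) = qint q (i+1) + q^(i+1) := qint_succ q (i+1)
        have e2 : qint q ((n-i-1)+1) = qint q (n-i-1) + q^(n-i-1) := qint_succ q (n-i-1)
        -- goal : qint (i+2) * B(n+1,i+2) = qint (n-i) * B(n+1,i+1)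
        rw [hd1, hd2, e1, e2]
        -- now linear in B(n,i), B(n,i+1), B(n,i+2); use h1, h2 and qint_add facts
        have e3 : (1:k) + q * qint q (n-i-1) = qint q (n-i-1) + q^(n-i-1) :=
          (qint_succ' q (n-i-1)).symm.trans (qint_succ q (n-i-1))
        rw [e2] at h1
        rw [e1] at h2
        linear_combination q * q^(i+1) * h2 + h1 + q^(i+1) * qbinom q n (i+1) * e3
      · rw [qbinom_eq_zero q (n+1) (i+1+1) (by omega),
          show n + 1 - (i+1) = 0 by omega]
        simp [qint]
end scalars3

section scalars4
variable {k : Type*} [Field k] (q : k)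

/-- `(i+1)_q B(n+1, i+1) = (n+1)_q B(n, i)`. -/
lemma qbinom_absorb2 (n i : ℕ) :
    qint q (i+1) * qbinom q (n+1) (i+1) = qint q (n+1) * qbinom q n i := by
  rcases Nat.lt_or_ge n i with h | h
  · rw [qbinom_eq_zero q (n+1) (i+1) (by omega), qbinom_eq_zero q n i (by omega)]
    ring
  · have hp := qbinom_pascal' q n i
    have h4 := qbinom_absorb q n i
    have hadd := qint_add q (n-i) (i+1)
    rw [show (n-i) + (i+1) = n+1 by omega] at hadd
    linear_combination qint q (i+1) * hp + h4 - qbinom q n i * hadd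
end scalars4

section Dcoef
variable {k : Type*} [Field k]

/-- integer exponent of `q` in the coefficient `D`. -/
def Ee (i r j l : ℕ) : ℤ :=
  ((l:ℤ) - i) * ((j:ℤ) - i) + (r.choose 2 : ℤ) + (r:ℤ) * ((j:ℤ) + (l:ℤ) - 2*(i:ℤ))

/-- coefficient of `x^(l-i) c^r y^(j-i)` in the expansion of `y^j x^l`. -/
def Dc (q lam : k) (i r j l : ℕ) : k :=
  lam^i * qbinom q j i * qbinom q l i * qfact q i * (-1:k)^(i+r) * qbinom q i r * q^(Ee i r j l)

variable (q : k) (hq : q ≠ 0)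

lemma qint_geom (n : ℕ) : (q - 1) * qint q n = q^n - 1 := by
  induction n with
  | zero => simp [qint]
  | succ n ih => rw [qint_succ, mul_add, ih, pow_succ]; ring

include hq

/-- dual Pascal with `zpow`. -/
lemma qbinom_pascal_z (n m : ℕ) :
    qbinom q (n+1) (m+1) = q^((n:ℤ)-m) * qbinom q n m + qbinom q n (m+1) := by
  rcases Nat.lt_or_ge n m with h | h
  · rw [qbinom_eq_zero q (n+1) (m+1) (by omega), qbinom_eq_zero q n m (by omega),
      qbinom_eq_zero q n (m+1) (by omega)]
    ring
  · rw [qbinom_pascal' q n m, show ((n:ℤ)-m) = ((n-m : ℕ) : ℤ) by omega, zpow_natCast]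

/-- the key identity `(r+1)_q B(j,i+1) B(i+1,r+1) = (j-i)_q B(j,i) B(i,r)` in exponential form. -/
lemma key3z (j i r : ℕ) :
    (q^((r:ℤ)+1) - 1) * qbinom q j (i+1) * qbinom q (i+1) (r+1)
      = (q^((j:ℤ)-i) - 1) * qbinom q j i * qbinom q i r := by
  rcases Nat.lt_or_ge j i with h | h
  · rw [qbinom_eq_zero q j (i+1) (by omega), qbinom_eq_zero q j i (by omega)]
    ring
  · rw [show ((r:ℤ)+1) = ((r+1 : ℕ) : ℤ) by omega, zpow_natCast,
      show ((j:ℤ)-i) = ((j-i : ℕ) : ℤ) by omega, zpow_natCast,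
      ← qint_geom, ← qint_geom]
    have h1 := qbinom_absorb2 q i r
    have h2 := qbinom_absorb q j i
    linear_combination (q-1) * qbinom q j (i+1) * h1
      + (q-1) * qbinom q i r * h2

/-- the core q-binomial identity behind the recursion. -/
lemma key_main (j l i r : ℕ) :
    qbinom q (j+1) (i+1) * qbinom q (l+1) (i+1) * qfact q (i+1) * qbinom q (i+1) (r+1)
      = q^((i:ℤ)-r) * qbinom q j (i+1) * qbinom q (l+1) (i+1) * qfact q (i+1)
          * qbinom q (i+1) (r+1)
        + qint q (l+1) * qbinom q j i * qbinom q l i * qfact q i *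
            (q^((j:ℤ)-r) * qbinom q i r + qbinom q i (r+1)) := by
  have hp : qbinom q (j+1) (i+1) = qbinom q j i + q^(i+1) * qbinom q j (i+1) := rfl
  have hf : qfact q (i+1) = qfact q i * qint q (i+1) := rfl
  have ha : qint q (i+1) * qbinom q (l+1) (i+1) = qint q (l+1) * qbinom q l i :=
    qbinom_absorb2 q l i
  have hdpz := qbinom_pascal_z q hq i r
  have hk3 := key3z q hq j i r
  have hqa : q^((i:ℤ)-r) * q^((r:ℤ)+1) = q^(i+1) := by
    rw [← zpow_add₀ hq, show ((i:ℤ)-r) + ((r:ℤ)+1) = ((i+1:ℕ):ℤ) by push_cast; ring,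
      zpow_natCast]
  have hqb : q^((i:ℤ)-r) * q^((j:ℤ)-i) = q^((j:ℤ)-r) := by
    rw [← zpow_add₀ hq]; ring_nf
  set u := qbinom q j i
  set v := qbinom q j (i+1)
  set X := qbinom q (l+1) (i+1)
  set Y := qbinom q l i
  set R1 := qbinom q (i+1) (r+1)
  set ρ := qbinom q i r
  set σ := qbinom q i (r+1)
  set F := qfact q i
  set L1 := qint q (l+1)
  set α := q^((i:ℤ)-r)
  linear_combination (X * qfact q (i+1) * R1) * hp
    + ((u + q^(i+1)*v - α*v) * X * R1) * hf
    + (F * (u + (q^(i+1) - α)*v) * R1) * ha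
    + (L1 * Y * F * u) * hdpz
    - (L1 * Y * F * v * R1) * hqa
    + (L1 * Y * F * u * ρ) * hqb
    + (L1 * Y * F * α) * hk3
end Dcoef

section DcRec
variable {k : Type*} [Field k] (q lam : k) (hq : q ≠ 0)

include hq

lemma Dc_SA (r j l : ℕ) :
    Dc q lam 0 r (j+1) (l+1) = q^((l:ℤ)+1) * Dc q lam 0 r j (l+1) := by
  cases r with
  | zero =>
      simp only [Dc, qbinom_zero_right, qfact, Nat.add_zero, pow_zero, one_mul, mul_one]
      rw [← zpow_add₀ hq]
      congr 1
      simp only [Ee]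
      push_cast
      ring
  | succ r =>
      simp [Dc, show qbinom q 0 (r+1) = (0:k) from rfl]

lemma Dc_SB (i j l : ℕ) :
    Dc q lam (i+1) 0 (j+1) (l+1)
      = q^((l:ℤ)+1) * Dc q lam (i+1) 0 j (l+1)
        - lam * qint q (l+1) * Dc q lam i 0 j l := by
  have hE1 : Ee (i+1) 0 (j+1) (l+1) = Ee i 0 j l := by
    simp only [Ee]; push_cast; ring
  have hzB : q^((l:ℤ)+1) * q^(Ee (i+1) 0 j (l+1)) = q^((i:ℤ)+1) * q^(Ee i 0 j l) := by
    rw [← zpow_add₀ hq, ← zpow_add₀ hq]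
    congr 1
    simp only [Ee]; push_cast; ring
  have hP : q^((i:ℤ)+1) = q^(i+1) := by
    rw [show ((i:ℤ)+1) = ((i+1:ℕ):ℤ) by push_cast; ring, zpow_natCast]
  have hp : qbinom q (j+1) (i+1) = qbinom q j i + q^(i+1) * qbinom q j (i+1) := rfl
  have hf : qfact q (i+1) = qfact q i * qint q (i+1) := rfl
  have ha : qint q (i+1) * qbinom q (l+1) (i+1) = qint q (l+1) * qbinom q l i :=
    qbinom_absorb2 q l i
  simp only [Dc, qbinom_zero_right, mul_one]
  rw [hE1]
  linear_combination
    (-((-1:k)^i * lam^(i+1) * qbinom q (l+1) (i+1) * qfact q (i+1) * q^(Ee i 0 j l))) * hp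
    + (-((-1:k)^i * lam^(i+1) * qbinom q j i * qbinom q (l+1) (i+1) * q^(Ee i 0 j l))) * hf
    + (-((-1:k)^i * lam^(i+1) * qbinom q j i * qfact q i * q^(Ee i 0 j l))) * ha
    + ((-1:k)^i * lam^(i+1) * qbinom q j (i+1) * qbinom q (l+1) (i+1) * qfact q (i+1)) * hzB
    + ((-1:k)^i * lam^(i+1) * qbinom q j (i+1) * qbinom q (l+1) (i+1) * qfact q (i+1)
        * q^(Ee i 0 j l)) * hP

lemma Dc_SC (i r j l : ℕ) :
    Dc q lam (i+1) (r+1) (j+1) (l+1)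
      = q^((l:ℤ)+1) * Dc q lam (i+1) (r+1) j (l+1)
        + lam * qint q (l+1) * q^(2*((j:ℤ)-i)+l) * Dc q lam i r j l
        - lam * qint q (l+1) * Dc q lam i (r+1) j l := by
  have hz1 : q^((l:ℤ)+1) * q^(Ee (i+1) (r+1) j (l+1))
      = q^((i:ℤ)-r) * q^(Ee (i+1) (r+1) (j+1) (l+1)) := by
    rw [← zpow_add₀ hq, ← zpow_add₀ hq]
    congr 1
    simp only [Ee]
    push_cast [Nat.choose_succ_succ, Nat.choose_one_right]
    ring
  have hz2 : q^(2*((j:ℤ)-i)+l) * q^(Ee i r j l)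
      = q^((j:ℤ)-r) * q^(Ee (i+1) (r+1) (j+1) (l+1)) := by
    rw [← zpow_add₀ hq, ← zpow_add₀ hq]
    congr 1
    simp only [Ee]
    push_cast [Nat.choose_succ_succ, Nat.choose_one_right]
    ring
  have hz4 : q^(Ee i (r+1) j l) = q^(Ee (i+1) (r+1) (j+1) (l+1)) := by
    congr 1
    simp only [Ee]
    push_cast [Nat.choose_succ_succ, Nat.choose_one_right]
    ring
  have KM := key_main q hq j l i r
  simp only [Dc]
  linear_combination
    ((-1:k)^(i+r) * lam^(i+1) * q^(Ee (i+1) (r+1) (j+1) (l+1))) * KM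
    + (-((-1:k)^(i+r) * lam^(i+1) * qbinom q j (i+1) * qbinom q (l+1) (i+1)
        * qfact q (i+1) * qbinom q (i+1) (r+1))) * hz1
    + (-((-1:k)^(i+r) * lam^(i+1) * qint q (l+1) * qbinom q j i * qbinom q l i
        * qfact q i * qbinom q i r)) * hz2
    + (-((-1:k)^(i+r) * lam^(i+1) * qint q (l+1) * qbinom q j i * qbinom q l i
        * qfact q i * qbinom q i (r+1))) * hz4
end DcRec

section elem
variable {k A : Type*} [Field k] [Ring A] [Algebra k A]
variable (q lam : k) (c x y : A)

/-- `y^n c = q^{2n} c y^n`. -/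
lemma ycpow (hyc : y*c = (q^2)•(c*y)) : ∀ n : ℕ, y^n * c = (q^(2*n)) • (c * y^n)
  | 0 => by simp
  | n+1 => by
      rw [pow_succ, mul_assoc, hyc, mul_smul_comm, ← mul_assoc, ycpow hyc n,
        smul_mul_assoc, smul_smul, mul_assoc, ← pow_succ, ← pow_add]
      rw [show 2+2*n = 2*(n+1) by omega]

lemma cshift (hcx : c*x = (q^2)•(x*c)) (α : k) :
    (α•c - 1)*x = x*((q^2*α)•c - 1) := by
  rw [sub_mul, smul_mul_assoc, hcx, mul_sub, mul_smul_comm, smul_smul, one_mul, mul_one]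
  ring_nf

lemma yxl (h1 : y*x = q•(x*y) + lam•(c-1)) (hcx : c*x = (q^2)•(x*c)) :
    ∀ l : ℕ, y * x^(l+1)
      = (q^(l+1)) • (x^(l+1) * y) + (lam * qint q (l+1)) • (x^l * (q^l • c - 1))
  | 0 => by
      simpa [qint, pow_one] using h1
  | l+1 => by
      rw [pow_succ, ← mul_assoc, yxl h1 hcx l, add_mul, smul_mul_assoc, smul_mul_assoc,
        mul_assoc, h1, mul_assoc, cshift q c x hcx]
      have e1 : qint q (l+1+1) = qint q (l+1) + q^(l+1) := qint_succ q (l+1)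
      have e2 : qint q (l+1+1) = 1 + q * qint q (l+1) := qint_succ' q (l+1)
      rw [mul_add]
      simp only [mul_smul_comm, smul_smul, smul_add, mul_sub, mul_one, smul_sub,
        ← mul_assoc, ← pow_succ]
      have e1' : qint q (2+l) = qint q (1+l) + q^(l+1) := by
        rw [show 2+l = (l+1)+1 by omega, show 1+l = l+1 by omega]; exact e1
      have e2' : qint q (2+l) = 1 + q * qint q (1+l) := by
        rw [show 2+l = (l+1)+1 by omega, show 1+l = l+1 by omega]; exact e2
      match_scalars
      all_goals try ring
      all_goals try linear_combination (-(lam * q * q^l)) * e2'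
      all_goals linear_combination lam * e1'

end elem

section core
variable {k A : Type*} [Field k] [Ring A] [Algebra k A]

/-- `B`-part summand (shifted indices). -/
def BBf (q lam : k) (c x y : A) (j l : ℕ) : ℕ → ℕ → A
  | 0, _ => 0
  | _+1, 0 => 0
  | i+1, r+1 => (lam * qint q (l+1) * q^(2*((j:ℤ)-(i:ℤ))+(l:ℤ)) * Dc q lam i r j l) •
      (x^(l-i) * c^(r+1) * y^(j-i))

/-- `C`-part summand (shifted index). -/
def CCf (q lam : k) (c x y : A) (j l : ℕ) : ℕ → ℕ → A
  | 0, _ => 0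
  | i+1, r => (lam * qint q (l+1) * Dc q lam i r j l) • (x^(l-i) * c^r * y^(j-i))

variable (q lam : k) (hq : q ≠ 0) (c x y : A)

lemma Dc_zero_right {i r : ℕ} (j l : ℕ) (h : i < r) : Dc q lam i r j l = 0 := by
  simp [Dc, qbinom_eq_zero q i r h]

lemma Dc_zero_left {j i : ℕ} (r l : ℕ) (h : j < i) : Dc q lam i r j l = 0 := by
  simp [Dc, qbinom_eq_zero q j i h]

lemma Dc_zero_mid {l i : ℕ} (r j : ℕ) (h : l < i) : Dc q lam i r j l = 0 := by
  simp [Dc, qbinom_eq_zero q l i h]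

include hq in
/-- pointwise splitting of the target summand via the scalar recursions. -/
lemma Tsplit (j l : ℕ) : ∀ i r : ℕ,
    Dc q lam i r (j+1) (l+1) • (x^(l+1-i) * c^r * y^(j+1-i))
      = (q^((l:ℤ)+1) * Dc q lam i r j (l+1)) • (x^(l+1-i) * c^r * y^(j+1-i))
        + BBf q lam c x y j l i r - CCf q lam c x y j l i r
  | 0, r => by rw [Dc_SA q lam hq r j l]; simp [BBf, CCf]
  | i+1, 0 => by
      rw [Dc_SB q lam hq i j l, sub_smul]
      simp only [BBf, CCf, Nat.add_sub_add_right]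
      abel
  | i+1, r+1 => by
      rw [Dc_SC q lam hq i r j l, sub_smul, add_smul]
      simp only [BBf, CCf, Nat.add_sub_add_right]
end core

section coremain
variable {k A : Type*} [Field k] [Ring A] [Algebra k A]
variable (q lam : k) (hq : q ≠ 0) (c x y : A)

include hq in
theorem core_expansion
    (h1 : y*x = q•(x*y) + lam•(c-1)) (hcx : c*x = (q^2)•(x*c)) (hyc : y*c = (q^2)•(c*y)) :
    ∀ j l : ℕ, y^j * x^l
      = ∑ i ∈ Finset.range (j+1), ∑ r ∈ Finset.range (j+1),
          Dc q lam i r j l • (x^(l-i) * c^r * y^(j-i)) := by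
  intro j
  induction j with
  | zero =>
      intro l
      have hE : Ee 0 0 0 l = 0 := by simp [Ee]
      simp [Finset.sum_range_one, Dc, hE, qbinom_zero_right, qfact]
  | succ j ih =>
      intro l
      match l with
      | 0 =>
          rw [pow_zero, mul_one]
          symm
          have h1' : ∀ i ∈ Finset.range (j+2), i ≠ 0 →
              (∑ r ∈ Finset.range (j+2), Dc q lam i r (j+1) 0
                • (x^(0-i) * c^r * y^(j+1-i))) = 0 := by
            intro i hi hne
            apply Finset.sum_eq_zero; intro r hr
            rw [Dc_zero_mid q lam r (j+1) (show 0 < i by omega)]; simp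
          rw [Finset.sum_eq_single_of_mem 0 (Finset.mem_range.mpr (by omega)) h1']
          have h2' : ∀ r ∈ Finset.range (j+2), r ≠ 0 →
              Dc q lam 0 r (j+1) 0 • (x^(0-0) * c^r * y^(j+1-0)) = 0 := by
            intro r hr hne
            rw [Dc_zero_right q lam (j+1) 0 (show 0 < r by omega)]; simp
          rw [Finset.sum_eq_single_of_mem 0 (Finset.mem_range.mpr (by omega)) h2']
          have hE : Ee 0 0 (j+1) 0 = 0 := by simp [Ee]
          simp [Dc, hE, qbinom_zero_right, qfact]
      | l+1 =>
          have hstep : y^(j+1) * x^(l+1)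
              = q^(l+1) • ((y^j * x^(l+1)) * y)
                + (lam * qint q (l+1)) • ((y^j * x^l) * (q^l • c - 1)) := by
            rw [pow_succ, mul_assoc, yxl q lam c x y h1 hcx l, mul_add,
              mul_smul_comm, mul_smul_comm, ← mul_assoc, ← mul_assoc]
          rw [hstep, ih (l+1), ih l]
          have hql : q^((l:ℤ)+1) = q^(l+1) := by
            rw [show ((l:ℤ)+1) = ((l+1:ℕ):ℤ) by push_cast; ring, zpow_natCast]
          have hA : q^(l+1) • ((∑ i ∈ Finset.range (j+1), ∑ r ∈ Finset.range (j+1),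
                Dc q lam i r j (l+1) • (x^(l+1-i) * c^r * y^(j-i))) * y)
              = ∑ i ∈ Finset.range (j+1), ∑ r ∈ Finset.range (j+1),
                  (q^((l:ℤ)+1) * Dc q lam i r j (l+1)) • (x^(l+1-i) * c^r * y^(j+1-i)) := by
            rw [Finset.sum_mul, Finset.smul_sum]
            apply Finset.sum_congr rfl
            intro i hi
            rw [Finset.sum_mul, Finset.smul_sum]
            apply Finset.sum_congr rfl
            intro r hr
            have hij : i < j+1 := Finset.mem_range.mp hi
            rw [smul_mul_assoc, smul_smul, hql, mul_assoc, ← pow_succ,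
              show j - i + 1 = j + 1 - i by omega]
          have hB : (lam * qint q (l+1)) • ((∑ i ∈ Finset.range (j+1),
                ∑ r ∈ Finset.range (j+1),
                  Dc q lam i r j l • (x^(l-i) * c^r * y^(j-i))) * (q^l • c - 1))
              = ∑ i ∈ Finset.range (j+1), ∑ r ∈ Finset.range (j+1),
                  (BBf q lam c x y j l (i+1) (r+1) - CCf q lam c x y j l (i+1) r) := by
            rw [Finset.sum_mul, Finset.smul_sum]
            apply Finset.sum_congr rfl
            intro i hi
            rw [Finset.sum_mul, Finset.smul_sum]
            apply Finset.sum_congr rfl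
            intro r hr
            have hij : i < j+1 := Finset.mem_range.mp hi
            have hz : q^(2*((j:ℤ)-(i:ℤ))+(l:ℤ)) = q^(l+2*(j-i)) := by
              rw [show 2*((j:ℤ)-(i:ℤ))+(l:ℤ) = ((l+2*(j-i) : ℕ) : ℤ) by push_cast; omega,
                zpow_natCast]
            rw [mul_sub, mul_one, mul_smul_comm, smul_mul_assoc,
              mul_assoc (x^(l-i) * c^r), ycpow q c y hyc (j-i), mul_smul_comm,
              ← mul_assoc (x^(l-i) * c^r), mul_assoc (x^(l-i)) (c^r) c, ← pow_succ]
            simp only [BBf, CCf, smul_sub, smul_smul, hz]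
            match_scalars <;> ring
          rw [hA, hB]
          have hAext : ∑ i ∈ Finset.range (j+2), ∑ r ∈ Finset.range (j+2),
                (q^((l:ℤ)+1) * Dc q lam i r j (l+1)) • (x^(l+1-i) * c^r * y^(j+1-i))
              = ∑ i ∈ Finset.range (j+1), ∑ r ∈ Finset.range (j+1),
                (q^((l:ℤ)+1) * Dc q lam i r j (l+1)) • (x^(l+1-i) * c^r * y^(j+1-i)) := by
            rw [Finset.sum_range_succ]
            have hz0 : (∑ r ∈ Finset.range (j+2),
                (q^((l:ℤ)+1) * Dc q lam (j+1) r j (l+1))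
                  • (x^(l+1-(j+1)) * c^r * y^(j+1-(j+1)))) = 0 :=
              Finset.sum_eq_zero (fun r _ => by
                rw [Dc_zero_left q lam r (l+1) (show j < j+1 by omega)]; simp)
            rw [hz0, add_zero]
            apply Finset.sum_congr rfl
            intro i hi
            have hij : i < j+1 := Finset.mem_range.mp hi
            rw [Finset.sum_range_succ,
              Dc_zero_right q lam j (l+1) (show i < j+1 from hij)]
            simp
          have hBz1 : ∀ r, BBf q lam c x y j l 0 r = 0 := fun r => rfl
          have hBz2 : ∀ i, BBf q lam c x y j l (i+1) 0 = 0 := fun i => rfl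
          have hCz1 : ∀ r, CCf q lam c x y j l 0 r = 0 := fun r => rfl
          have hBext : ∑ i ∈ Finset.range (j+2), ∑ r ∈ Finset.range (j+2),
                BBf q lam c x y j l i r
              = ∑ i ∈ Finset.range (j+1), ∑ r ∈ Finset.range (j+1),
                BBf q lam c x y j l (i+1) (r+1) := by
            rw [Finset.sum_range_succ']
            simp only [hBz1, Finset.sum_const_zero, add_zero]
            apply Finset.sum_congr rfl
            intro i hi
            rw [Finset.sum_range_succ']
            simp only [hBz2, add_zero]
          have hCext : ∑ i ∈ Finset.range (j+2), ∑ r ∈ Finset.range (j+2),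
                CCf q lam c x y j l i r
              = ∑ i ∈ Finset.range (j+1), ∑ r ∈ Finset.range (j+1),
                CCf q lam c x y j l (i+1) r := by
            rw [Finset.sum_range_succ']
            simp only [hCz1, Finset.sum_const_zero, add_zero]
            apply Finset.sum_congr rfl
            intro i hi
            have hij : i < j+1 := Finset.mem_range.mp hi
            rw [Finset.sum_range_succ]
            have hic : CCf q lam c x y j l (i+1) (j+1) = 0 := by
              show (lam * qint q (l+1) * Dc q lam i (j+1) j l) • _ = 0
              rw [Dc_zero_right q lam j l (show i < j+1 from hij)]
              simp
            rw [hic, add_zero]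
          simp only [Finset.sum_sub_distrib]
          rw [← hAext, ← hBext, ← hCext, eq_comm]
          calc ∑ i ∈ Finset.range (j+2), ∑ r ∈ Finset.range (j+2),
                Dc q lam i r (j+1) (l+1) • (x^(l+1-i) * c^r * y^(j+1-i))
              = ∑ i ∈ Finset.range (j+2), ∑ r ∈ Finset.range (j+2),
                ((q^((l:ℤ)+1) * Dc q lam i r j (l+1)) • (x^(l+1-i) * c^r * y^(j+1-i))
                  + BBf q lam c x y j l i r - CCf q lam c x y j l i r) :=
                Finset.sum_congr rfl (fun i _ => Finset.sum_congr rfl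
                  (fun r _ => Tsplit q lam hq c x y j l i r))
            _ = _ := by
                simp only [Finset.sum_add_distrib, Finset.sum_sub_distrib]
                abel
end coremain

section prodexp
variable {k A : Type*} [Field k] [Ring A] [Algebra k A]

lemma dec_scalar (q : k) (i r t : ℕ) :
    q^(t+i) * ((-1:k)^(i+r) * qbinom q i r * q^(r.choose 2) * q^(r*t))
      - (-1:k)^(i+(r+1)) * qbinom q i (r+1) * q^((r+1).choose 2) * q^((r+1)*t)
      = (-1:k)^((i+1)+(r+1)) * qbinom q (i+1) (r+1) * q^((r+1).choose 2) * q^((r+1)*t) := by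
  have hch : (r+1).choose 2 = r.choose 2 + r := by
    rw [show (2:ℕ) = 1+1 from rfl, Nat.choose_succ_succ, Nat.choose_one_right]; ring
  rcases Nat.lt_or_ge i r with h | h
  · rw [qbinom_eq_zero q i r (by omega), qbinom_eq_zero q i (r+1) (by omega),
      qbinom_eq_zero q (i+1) (r+1) (by omega)]
    ring
  · obtain ⟨d, rfl⟩ : ∃ d, i = r + d := ⟨i - r, by omega⟩
    have hdp := qbinom_pascal' q (r+d) r
    rw [show r + d - r = d by omega] at hdp
    rw [hdp, hch]
    ring

lemma prod_expand (q : k) (c : A) : ∀ (i t : ℕ),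
    ((List.range i).map (fun m => q^(t + (i - 1 - m)) • c - 1)).prod
      = ∑ r ∈ Finset.range (i+1),
          ((-1:k)^(i+r) * qbinom q i r * q^(r.choose 2) * q^(r*t)) • c^r := by
  intro i
  induction i with
  | zero => intro t; simp [qbinom]
  | succ i ih =>
      intro t
      rw [List.range_succ_eq_map, List.map_cons, List.prod_cons, List.map_map]
      have hfe : ((fun m => q ^ (t + (i + 1 - 1 - m)) • c - 1) ∘ Nat.succ)
          = (fun m => q ^ (t + (i - 1 - m)) • c - 1) := by
        funext m
        simp only [Function.comp]
        rw [show i + 1 - 1 - Nat.succ m = i - 1 - m by omega]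
      rw [hfe, ih t, show i + 1 - 1 - 0 = i by omega]
      -- expand the product
      rw [sub_mul, one_mul, smul_mul_assoc, Finset.mul_sum]
      have hterm : ∀ r, c * (((-1:k)^(i+r) * qbinom q i r * q^(r.choose 2) * q^(r*t)) • c^r)
          = ((-1:k)^(i+r) * qbinom q i r * q^(r.choose 2) * q^(r*t)) • c^(r+1) := by
        intro r
        rw [mul_smul_comm, ← pow_succ']
      rw [Finset.sum_congr rfl (fun r _ => hterm r), Finset.smul_sum]
      -- peel r = 0 from target and source
      rw [Finset.sum_range_succ' (fun r => ((-1:k)^(i+1+r) * qbinom q (i+1) r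
            * q^(r.choose 2) * q^(r*t)) • c^r) (i+1)]
      rw [Finset.sum_range_succ' (fun r => ((-1:k)^(i+r) * qbinom q i r
            * q^(r.choose 2) * q^(r*t)) • c^r) i]
      have hext : ∑ r ∈ Finset.range i, ((-1:k)^(i+(r+1)) * qbinom q i (r+1)
            * q^((r+1).choose 2) * q^((r+1)*t)) • c^(r+1)
          = ∑ r ∈ Finset.range (i+1), ((-1:k)^(i+(r+1)) * qbinom q i (r+1)
            * q^((r+1).choose 2) * q^((r+1)*t)) • c^(r+1) := by
        rw [Finset.sum_range_succ, qbinom_eq_zero q i (i+1) (by omega)]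
        simp
      rw [hext]
      have hsum : (∑ r ∈ Finset.range (i+1),
            q^(t+i) • (((-1:k)^(i+r) * qbinom q i r * q^(r.choose 2) * q^(r*t)) • c^(r+1)))
          - (∑ r ∈ Finset.range (i+1), ((-1:k)^(i+(r+1)) * qbinom q i (r+1)
              * q^((r+1).choose 2) * q^((r+1)*t)) • c^(r+1))
          = ∑ r ∈ Finset.range (i+1), ((-1:k)^(i+1+(r+1)) * qbinom q (i+1) (r+1)
              * q^((r+1).choose 2) * q^((r+1)*t)) • c^(r+1) := by
        rw [← Finset.sum_sub_distrib]
        apply Finset.sum_congr rfl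
        intro r _
        rw [smul_smul, ← sub_smul]
        exact congrArg (· • c^(r+1)) (dec_scalar q i r t)
      rw [sub_add_eq_sub_sub, hsum, sub_eq_add_neg, ← neg_smul]
      congr 1
      rw [qbinom_zero_right, qbinom_zero_right]
      ring
end prodexp

section convert
variable {k A : Type*} [Field k] [Ring A] [Algebra k A]

lemma term_convert (q lam : k) (c x y : A) (j l i : ℕ) (hjl : i ≤ j) (hil : i ≤ l) :
    (∑ r ∈ Finset.range (j+1), Dc q lam i r j l • (x^(l-i) * c^r * y^(j-i)))
      = x^(l-i) * ((lam^i * qbinom q j i * qbinom q l i * qfact q i * q^((l-i)*(j-i))) •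
          ((List.range i).map (fun m => q^(j+l-(m+1)-i) • c - 1)).prod) * y^(j-i) := by
  have hfun : ∀ m ∈ List.range i, (fun m => q^(j+l-(m+1)-i) • c - 1) m
      = (fun m => q^((j+l-2*i) + (i-1-m)) • c - 1) m := by
    intro m hm
    have hmi : m < i := List.mem_range.mp hm
    simp only
    rw [show j+l-(m+1)-i = (j+l-2*i) + (i-1-m) by omega]
  rw [List.map_congr_left hfun, prod_expand q c i (j+l-2*i)]
  rw [Finset.smul_sum, Finset.mul_sum, Finset.sum_mul]
  have hsub : Finset.range (i+1) ⊆ Finset.range (j+1) := by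
    intro z hz; simp only [Finset.mem_range] at *; omega
  rw [← Finset.sum_subset hsub (fun r _ hr => by
    rw [Dc_zero_right q lam j l (show i < r by simp only [Finset.mem_range] at hr; omega)]
    simp)]
  apply Finset.sum_congr rfl
  intro r _
  have c1 : ((l - i : ℕ) : ℤ) = (l:ℤ) - i := by omega
  have c2 : ((j - i : ℕ) : ℤ) = (j:ℤ) - i := by omega
  have c3 : ((j + l - 2*i : ℕ) : ℤ) = (j:ℤ) + l - 2*i := by omega
  have hcast : Ee i r j l = (((l-i)*(j-i) + r.choose 2 + r*(j+l-2*i) : ℕ) : ℤ) := by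
    simp only [Ee]
    push_cast [c1, c2, c3]
    ring
  have hEq : q^(Ee i r j l) = q^(((l-i)*(j-i) + r.choose 2 + r*(j+l-2*i)) : ℕ) := by
    rw [hcast, zpow_natCast]
  rw [smul_smul, mul_smul_comm, smul_mul_assoc]
  simp only [Dc]
  rw [hEq]
  congr 1
  rw [pow_add, pow_add]
  ring

lemma conj_pow_lemma (q : k) (hq : q ≠ 0) (b : Aˣ) (x : A)
    (hbx : (b : A) * x * ((b⁻¹ : Aˣ) : A) = q • x) (j l : ℕ) :
    (b : A)^j * x^l * ((b⁻¹ : Aˣ) : A)^j = (q^(j*l)) • x^l := by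
  have hbx1 : (b:A)*x = q•(x*(b:A)) := by
    have h := congrArg (fun z => z * (b:A)) hbx
    simpa [mul_assoc, Units.inv_mul, smul_mul_assoc] using h
  have hbxl : ∀ l : ℕ, (b:A) * x^l = (q^l) • (x^l * (b:A)) := by
    intro l
    induction l with
    | zero => simp
    | succ l ih =>
        rw [pow_succ, ← mul_assoc, ih, smul_mul_assoc, mul_assoc, hbx1,
          mul_smul_comm, smul_smul, ← mul_assoc, ← pow_succ]
  have hbjxl : ∀ j : ℕ, (b:A)^j * x^l = (q^(j*l)) • (x^l * (b:A)^j) := by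
    intro j
    induction j with
    | zero => simp
    | succ j ih =>
        rw [pow_succ, mul_assoc, hbxl, mul_smul_comm, ← mul_assoc, ih,
          smul_mul_assoc, smul_smul, mul_assoc, ← pow_succ, ← pow_add]
        rw [show l + j*l = (j+1)*l by ring]
  have hbb : (b:A)^j * ((b⁻¹ : Aˣ) : A)^j = 1 := by
    rw [← Units.val_pow_eq_pow_val, ← Units.val_pow_eq_pow_val, ← Units.val_mul,
      inv_pow, mul_inv_cancel, Units.val_one]
  rw [hbjxl, smul_mul_assoc, mul_assoc, hbb, mul_one]
end convert


/-- Generalized Kac commutation formula: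
`_{b^j}[y^j, x^k] = Σ_{i=1}^{min(j,k)} x^{k-i} f_i^{j,k} y^{j-i}` with
`f_i^{j,k} = λ^i binom(j,i)_q binom(k,i)_q (i)_q! q^{(k-i)(j-i)} Π_{m=1}^i (q^{j+k-m-i} ab - 1)`. -/
theorem kac_commutation_formula {k A : Type*} [Field k] [CharZero k] [Ring A] [Algebra k A]
    (a b : Aˣ) (x y : A) (q lam : k) (hq : q ≠ 0) (hlam : lam ≠ 0)
    (hax : (a : A) * x * ((a⁻¹ : Aˣ) : A) = q • x)
    (hbx : (b : A) * x * ((b⁻¹ : Aˣ) : A) = q • x)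
    (hay : (a : A) * y * ((a⁻¹ : Aˣ) : A) = q⁻¹ • y)
    (hby : (b : A) * y * ((b⁻¹ : Aˣ) : A) = q⁻¹ • y)
    (hc : y * x - ((b : A) * x * ((b⁻¹ : Aˣ) : A)) * y = lam • ((a : A) * (b : A) - 1)) :
    ∀ j l : ℕ, 1 ≤ j → 1 ≤ l →
      y ^ j * x ^ l - ((b : A) ^ j * x ^ l * ((b⁻¹ : Aˣ) : A) ^ j) * y ^ j
        = ∑ i ∈ Finset.Icc 1 (min j l),
            x ^ (l - i) *
              ((lam ^ i * qbinom q j i * qbinom q l i * qfact q i * q ^ ((l - i) * (j - i))) •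
                ((List.range i).map
                    (fun m => q ^ (j + l - (m + 1) - i) • ((a : A) * (b : A)) - 1)).prod) *
              y ^ (j - i) := by
  intro j l hj hl
  set c : A := (a : A) * (b : A) with hcdef
  -- one-sided commutation relations
  have hax1 : (a:A)*x = q•(x*(a:A)) := by
    have h := congrArg (fun z => z * (a:A)) hax
    simpa [mul_assoc, Units.inv_mul, smul_mul_assoc] using h
  have hbx1 : (b:A)*x = q•(x*(b:A)) := by
    have h := congrArg (fun z => z * (b:A)) hbx
    simpa [mul_assoc, Units.inv_mul, smul_mul_assoc] using h
  have hay1 : (a:A)*y = q⁻¹•(y*(a:A)) := by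
    have h := congrArg (fun z => z * (a:A)) hay
    simpa [mul_assoc, Units.inv_mul, smul_mul_assoc] using h
  have hby1 : (b:A)*y = q⁻¹•(y*(b:A)) := by
    have h := congrArg (fun z => z * (b:A)) hby
    simpa [mul_assoc, Units.inv_mul, smul_mul_assoc] using h
  have hya : y*(a:A) = q•((a:A)*y) := by
    rw [hay1, smul_smul, mul_inv_cancel₀ hq, one_smul]
  have hyb : y*(b:A) = q•((b:A)*y) := by
    rw [hby1, smul_smul, mul_inv_cancel₀ hq, one_smul]
  -- the three core relations
  have h1 : y*x = q•(x*y) + lam•(c-1) := by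
    have h := hc
    rw [hbx, smul_mul_assoc, sub_eq_iff_eq_add'] at h
    rw [h, hcdef]
  have hcx : c*x = (q^2)•(x*c) := by
    rw [hcdef, mul_assoc, hbx1, mul_smul_comm, ← mul_assoc, hax1, smul_mul_assoc,
      smul_smul, mul_assoc, ← pow_two]
  have hyc : y*c = (q^2)•(c*y) := by
    rw [hcdef, ← mul_assoc, hya, smul_mul_assoc, mul_assoc, hyb, mul_smul_comm,
      smul_smul, ← mul_assoc, ← pow_two]
  -- conjugation of x^l by b^j
  rw [conj_pow_lemma q hq b x hbx j l, smul_mul_assoc]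
  -- core expansion
  rw [core_expansion q lam hq c x y h1 hcx hyc j l]
  -- peel off the i = 0 term
  rw [Finset.sum_range_succ' (fun i => ∑ r ∈ Finset.range (j+1),
    Dc q lam i r j l • (x^(l-i) * c^r * y^(j-i))) j]
  have hF0 : (∑ r ∈ Finset.range (j+1), Dc q lam 0 r j l • (x^(l-0) * c^r * y^(j-0)))
      = q^(j*l) • (x^l * y^j) := by
    rw [Finset.sum_eq_single_of_mem 0 (Finset.mem_range.mpr (by omega))
      (fun r _ hr => by
        rw [Dc_zero_right q lam j l (show 0 < r by omega)]; simp)]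
    have hD : Dc q lam 0 0 j l = q^(j*l) := by
      simp only [Dc, Ee, qbinom_zero_right, qfact, pow_zero, one_mul, mul_one,
        Nat.choose, Nat.cast_zero, Nat.cast_ofNat, sub_zero, zero_mul, mul_zero, add_zero,
        Nat.add_zero]
      rw [show ((l:ℤ))*((j:ℤ)) = ((j*l : ℕ):ℤ) by push_cast; ring, zpow_natCast]
    rw [hD]
    simp
  rw [hF0, add_sub_cancel_right]
  -- convert each remaining term
  have hRHS : (∑ i ∈ Finset.Icc 1 (min j l),
        x ^ (l - i) *
          ((lam ^ i * qbinom q j i * qbinom q l i * qfact q i * q ^ ((l - i) * (j - i))) •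
            ((List.range i).map (fun m => q ^ (j + l - (m + 1) - i) • c - 1)).prod) *
          y ^ (j - i))
      = ∑ i ∈ Finset.Icc 1 j,
        x ^ (l - i) *
          ((lam ^ i * qbinom q j i * qbinom q l i * qfact q i * q ^ ((l - i) * (j - i))) •
            ((List.range i).map (fun m => q ^ (j + l - (m + 1) - i) • c - 1)).prod) *
          y ^ (j - i) := by
    apply Finset.sum_subset (Finset.Icc_subset_Icc le_rfl (min_le_left j l))
    intro i hi hni
    simp only [Finset.mem_Icc] at hi hni
    have hli : l < i := by omega
    rw [qbinom_eq_zero q l i hli]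
    simp
  rw [hRHS, ← Finset.Ico_add_one_right_eq_Icc, Finset.sum_Ico_eq_sum_range]
  rw [show j + 1 - 1 = j from rfl]
  apply Finset.sum_congr rfl
  intro i hi
  have hij : i < j := Finset.mem_range.mp hi
  rw [show 1 + i = i + 1 by omega]
  rcases Nat.lt_or_ge l (i+1) with h | h
  · rw [qbinom_eq_zero q l (i+1) h]
    simp only [mul_zero, zero_mul, zero_smul]
    apply Finset.sum_eq_zero
    intro r _
    rw [Dc_zero_mid q lam r j h]
    simp
  · exact term_convert q lam c x y j l (i+1) (by omega) h
end

section
/- Let M be a multiplicity-free module of finite length over a ring A (every simple module occurs at most once in a composition series). Then the map J ↦ J/rad(J) is a bijection between the set of local (join-irreducible) submodules of M and the set of isomorphism classes of composition factors of M. In particular the composition length of M equals the number of local submodules of M. -/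
open DirectSum

variable {A M : Type*} [Ring A] [AddCommGroup M] [Module A M]

/-- The radical of a submodule `N`: the intersection of its maximal submodules. -/
def radOf (N : Submodule A M) : Submodule A M := sInf {K : Submodule A M | K ⋖ N}

/-- A submodule is local (join-irreducible) if it is nonzero and has a unique
maximal submodule. -/
def IsLocalSub (J : Submodule A M) : Prop := J ≠ ⊥ ∧ ∃! R : Submodule A M, R ⋖ J

/-- The top (head) of a submodule: `J / rad(J)`. -/
abbrev topQuot (J : Submodule A M) :=
  ↥J ⧸ Submodule.comap J.subtype (radOf J)

/-- The `i`-th factor of a composition series of submodules. -/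
abbrev csFactor (s : CompositionSeries (Submodule A M)) (i : Fin s.length) :=
  ↥(s i.succ) ⧸ Submodule.comap (s i.succ).subtype (s i.castSucc)

/-- `M` is multiplicity free: in any composition series of `M`, no two distinct
factors are isomorphic. -/
def MultFree (A M : Type*) [Ring A] [AddCommGroup M] [Module A M] : Prop :=
  ∀ s : CompositionSeries (Submodule A M), s.head = ⊥ → s.last = ⊤ →
    ∀ i j : Fin s.length, Nonempty (csFactor s i ≃ₗ[A] csFactor s j) → i = j

abbrev qF (K L : Submodule A M) := ↥L ⧸ Submodule.comap L.subtype K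
lemma qF_congr {K L K' L' : Submodule A M} (hK : K = K') (hL : L = L') :
    Nonempty (qF K L ≃ₗ[A] qF K' L') := by subst hK; subst hL; exact ⟨LinearEquiv.refl _ _⟩
lemma exists_covBy_between [IsNoetherian A M] {N J : Submodule A M} (h : N < J) :
    ∃ R, N ≤ R ∧ R ⋖ J := by
  obtain ⟨R, ⟨hNR, hRJ⟩, hmax⟩ := (wellFounded_gt (α := Submodule A M)).has_min
    {Z | N ≤ Z ∧ Z < J} ⟨N, le_refl N, h⟩
  exact ⟨R, hNR, hRJ, fun z hz1 hz2 => hmax z ⟨hNR.trans hz1.le, hz2⟩ hz1⟩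
lemma exists_cs_between [IsNoetherian A M] [IsArtinian A M] :
    ∀ {Y X : Submodule A M}, X ≤ Y →
      ∃ t : CompositionSeries (Submodule A M), t.head = X ∧ t.last = Y := by
  intro Y
  induction Y using WellFoundedLT.induction with
  | _ Y ih =>
    intro X hXY
    rcases eq_or_lt_of_le hXY with rfl | hlt
    · exact ⟨RelSeries.singleton _ X, rfl, rfl⟩
    · obtain ⟨Z, hXZ, hZY⟩ := exists_covBy_between hlt
      obtain ⟨t, ht1, ht2⟩ := ih Z hZY.lt (X := X) hXZ
      exact ⟨t.snoc Y (show JordanHolderLattice.IsMaximal t.last Y from ht2 ▸ hZY),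
        by rw [RelSeries.head_snoc, ht1], by rw [RelSeries.last_snoc]⟩
lemma mem_pair {t : CompositionSeries (Submodule A M)} {K L : Submodule A M}
    (hKL : K ⋖ L) (hK : K ∈ t) (hL : L ∈ t) :
    ∃ i : Fin t.length, t i.castSucc = K ∧ t i.succ = L := by
  obtain ⟨a, rfl⟩ := hK
  obtain ⟨b, rfl⟩ := hL
  have hab : a < b := t.strictMono.lt_iff_lt.mp hKL.lt
  have ha : (a : ℕ) < t.length := by have := b.2; omega
  refine ⟨⟨a, ha⟩, rfl, ?_⟩
  have hstep : t a ⋖ t (⟨a, ha⟩ : Fin t.length).succ := t.step ⟨a, ha⟩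
  have hle : t (⟨a, ha⟩ : Fin t.length).succ ≤ t b := by
    apply t.strictMono.monotone
    change (a : ℕ) + 1 ≤ (b : ℕ); omega
  rcases hKL.eq_or_eq (le_of_lt hstep.lt) hle with h | h
  · exact absurd h (ne_of_gt hstep.lt)
  · exact h
lemma mem_append_left {α : Type*} {r : SetRel α α} {p q : RelSeries r} {c : (p.last, q.head) ∈ r}
    {x : α} (hx : x ∈ p) : x ∈ p.append q c := by
  obtain ⟨i, rfl⟩ := hx
  exact ⟨_, RelSeries.append_apply_left p q c i⟩
lemma mem_append_right {α : Type*} {r : SetRel α α} {p q : RelSeries r} {c : (p.last, q.head) ∈ r}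
    {x : α} (hx : x ∈ q) : x ∈ p.append q c := by
  obtain ⟨i, rfl⟩ := hx
  exact ⟨_, RelSeries.append_apply_right p q c i⟩
lemma up_move {P Q C : Submodule A M} (h : P ⋖ Q) (hPC : Q ⊓ (C ⊔ P) = P) :
    (C ⊔ P) ⋖ (C ⊔ Q) ∧ Nonempty (qF (C ⊔ P) (C ⊔ Q) ≃ₗ[A] qF P Q) := by
  have hsup : (C ⊔ P) ⊔ Q = C ⊔ Q := by
    rw [sup_assoc, sup_eq_right.mpr h.le]
  have hinf : (C ⊔ P) ⊓ Q = P := by rw [inf_comm]; exact hPC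
  have hcov : (C ⊔ P) ⋖ (C ⊔ Q) := by
    have h1 : Q ⊓ (C ⊔ P) ⋖ Q := by rw [hPC]; exact h
    have h2 := covBy_sup_of_inf_covBy_left (a := Q) (b := C ⊔ P) h1
    rwa [sup_comm Q (C ⊔ P), hsup] at h2
  refine ⟨hcov, ?_⟩
  have := JordanHolderLattice.second_iso_of_eq (X := Submodule A M)
    (x := C ⊔ P) (y := Q) (a := C ⊔ Q) (b := P)
    (show JordanHolderLattice.IsMaximal (C ⊔ P) (C ⊔ Q) from hcov) hsup hinf
  exact ⟨this.linearEquiv⟩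
lemma down_move {R Q J : Submodule A M} (h : R ⋖ J) (hsup : R ⊔ Q = J) :
    (R ⊓ Q) ⋖ Q ∧ Nonempty (qF R J ≃ₗ[A] qF (R ⊓ Q) Q) := by
  have h' : R ⋖ R ⊔ Q := hsup ▸ h
  refine ⟨inf_covBy_of_covBy_sup_left h', ?_⟩
  exact ⟨(JordanHolderLattice.second_iso_of_eq (X := Submodule A M)
    (show JordanHolderLattice.IsMaximal R J from h) hsup rfl).linearEquiv⟩
lemma mf_pair [IsNoetherian A M] [IsArtinian A M] (hMF : MultFree A M)
    {K1 L1 K2 L2 : Submodule A M} (h1 : K1 ⋖ L1) (h2 : K2 ⋖ L2) (h12 : L1 ≤ K2)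
    (hiso : Nonempty (qF K1 L1 ≃ₗ[A] qF K2 L2)) : False := by
  obtain ⟨t1, ht1h, ht1l⟩ := exists_cs_between (X := (⊥ : Submodule A M)) (Y := K1) bot_le
  obtain ⟨t2, ht2h, ht2l⟩ := exists_cs_between (X := L1) (Y := K2) h12
  obtain ⟨t3, ht3h, ht3l⟩ := exists_cs_between (X := L2) (Y := (⊤ : Submodule A M)) le_top
  have c2 : JordanHolderLattice.IsMaximal t2.last t3.head := by rw [ht2l, ht3h]; exact h2
  have c1 : JordanHolderLattice.IsMaximal t1.last (t2.append t3 c2).head := by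
    rw [ht1l, RelSeries.head_append, ht2h]; exact h1
  set t : CompositionSeries (Submodule A M) := t1.append (t2.append t3 c2) c1 with ht
  have hth : t.head = ⊥ := by rw [RelSeries.head_append, ht1h]
  have htl : t.last = ⊤ := by rw [RelSeries.last_append, RelSeries.last_append, ht3l]
  have hK1 : K1 ∈ t := mem_append_left (ht1l ▸ t1.last_mem)
  have hL1 : L1 ∈ t := mem_append_right (mem_append_left (ht2h ▸ t2.head_mem))
  have hK2 : K2 ∈ t := mem_append_right (mem_append_left (ht2l ▸ t2.last_mem))
  have hL2 : L2 ∈ t := mem_append_right (mem_append_right (ht3h ▸ t3.head_mem))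
  obtain ⟨i, hi1, hi2⟩ := mem_pair h1 hK1 hL1
  obtain ⟨j, hj1, hj2⟩ := mem_pair h2 hK2 hL2
  have hij : i ≠ j := by
    rintro rfl
    have hKK : K1 = K2 := by rw [← hi1, ← hj1]
    exact absurd h1.lt (h12.trans hKK.ge).not_gt
  obtain ⟨e1⟩ := qF_congr (A := A) hi1 hi2
  obtain ⟨e2⟩ := qF_congr (A := A) hj1.symm hj2.symm
  obtain ⟨e⟩ := hiso
  exact hij (hMF t hth htl i j ⟨e1.trans (e.trans e2)⟩)
lemma radOf_eq_of_unique {J R : Submodule A M} (hR : R ⋖ J)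
    (hu : ∀ R', R' ⋖ J → R' = R) : radOf J = R :=
  le_antisymm (sInf_le hR) (le_sInf fun K hK => (hu K hK).ge)
lemma localStruct [IsNoetherian A M] {J : Submodule A M} (hJ : IsLocalSub J) :
    ∃ R, R ⋖ J ∧ radOf J = R ∧ (∀ N, N < J → N ≤ R) := by
  obtain ⟨hne, R, hR, huniq⟩ := hJ
  refine ⟨R, hR, radOf_eq_of_unique hR huniq, fun N hN => ?_⟩
  obtain ⟨R', hNR', hR'⟩ := exists_covBy_between hN
  exact (huniq R' hR') ▸ hNR'
lemma top_iso {J R : Submodule A M} (hrad : radOf J = R) :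
    Nonempty (topQuot J ≃ₗ[A] qF R J) := qF_congr hrad rfl
lemma local_inj [IsNoetherian A M] [IsArtinian A M] (hMF : MultFree A M)
    {J1 J2 : Submodule A M} (h1 : IsLocalSub J1) (h2 : IsLocalSub J2)
    (hiso : Nonempty (topQuot J1 ≃ₗ[A] topQuot J2)) : J1 = J2 := by
  obtain ⟨R1, hR1, hrad1, hprop1⟩ := localStruct h1
  obtain ⟨R2, hR2, hrad2, hprop2⟩ := localStruct h2
  obtain ⟨e1⟩ := top_iso (A := A) hrad1
  obtain ⟨e2⟩ := top_iso (A := A) hrad2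
  obtain ⟨e⟩ := hiso
  have F : Nonempty (qF R1 J1 ≃ₗ[A] qF R2 J2) := ⟨(e1.symm.trans e).trans e2⟩
  by_contra hne
  by_cases hle : J1 ≤ J2
  · exact mf_pair hMF hR1 hR2 (hprop2 J1 (lt_of_le_of_ne hle hne)) F
  by_cases hle2 : J2 ≤ J1
  · exact mf_pair hMF hR2 hR1 (hprop1 J2 (lt_of_le_of_ne hle2 (Ne.symm hne))) ⟨F.some.symm⟩
  have hinf : J1 ⊓ J2 ≤ R2 :=
    hprop2 _ (lt_of_le_of_ne inf_le_right fun h => hle2 (inf_eq_right.mp h))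
  have hmod : J2 ⊓ (J1 ⊔ R2) = R2 := by
    rw [← inf_sup_assoc_of_le J1 hR2.le]
    exact sup_eq_right.mpr ((inf_comm J1 J2 ▸ hinf : J2 ⊓ J1 ≤ R2))
  obtain ⟨hcov, ⟨g⟩⟩ := up_move (C := J1) hR2 hmod
  exact mf_pair hMF hR1 hcov (le_sup_left : J1 ≤ J1 ⊔ R2) ⟨F.some.trans g.symm⟩
lemma exists_minimal_mem [IsArtinian A M] (S : Set (Submodule A M)) (hS : S.Nonempty) :
    ∃ J ∈ S, ∀ N ∈ S, ¬ N < J := by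
  obtain ⟨J, hJ, hmin⟩ := (wellFounded_lt (α := Submodule A M)).has_min S hS
  exact ⟨J, hJ, hmin⟩
lemma exists_local_of_occ [IsNoetherian A M] [IsArtinian A M] (hMF : MultFree A M)
    {P0 Q0 : Submodule A M} (h0 : P0 ⋖ Q0) :
    ∃ J : Submodule A M, IsLocalSub J ∧ Nonempty (qF P0 Q0 ≃ₗ[A] topQuot J) := by
  set S : Set (Submodule A M) :=
    {N | ∃ P Q, P ⋖ Q ∧ Q ≤ N ∧ Nonempty (qF P Q ≃ₗ[A] qF P0 Q0)} with hSdef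
  have hQ0 : Q0 ∈ S := ⟨P0, Q0, h0, le_refl _, ⟨LinearEquiv.refl _ _⟩⟩
  obtain ⟨J, hJS, hmin⟩ := exists_minimal_mem S ⟨Q0, hQ0⟩
  obtain ⟨P, Q, hPQ, hQJ, hisoPQ⟩ := hJS
  have hJbot : J ≠ ⊥ := by
    rintro rfl
    exact not_lt_bot (hPQ.lt.trans_le hQJ)
  have hb : ∀ R, R ⋖ J → Nonempty (qF R J ≃ₗ[A] qF P0 Q0) := by
    intro R hR
    by_cases hQR : Q ≤ R
    · exact absurd hR.lt (hmin R ⟨P, Q, hPQ, hQR, hisoPQ⟩)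
    · have hsupRQ : R ⊔ Q = J := by
        rcases hR.eq_or_eq (le_sup_left : R ≤ R ⊔ Q) (sup_le hR.le hQJ) with h | h
        · exact absurd (sup_eq_left.mp h) hQR
        · exact h
      obtain ⟨hcovRQ, ⟨gRJ⟩⟩ := down_move hR hsupRQ
      by_cases hPP : R ⊓ Q = P
      · exact ⟨(gRJ.trans (qF_congr hPP rfl).some).trans hisoPQ.some⟩
      · have hsup2 : P ⊔ (R ⊓ Q) = Q :=
          JordanHolderLattice.sup_eq_of_isMaximal
            (show JordanHolderLattice.IsMaximal P Q from hPQ)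
            (show JordanHolderLattice.IsMaximal (R ⊓ Q) Q from hcovRQ)
            (fun h => hPP h.symm)
        obtain ⟨hcov3, ⟨g3⟩⟩ := down_move hPQ hsup2
        exact absurd hR.lt
          (hmin R ⟨_, _, hcov3, inf_le_left, ⟨g3.symm.trans hisoPQ.some⟩⟩)
  obtain ⟨R, -, hR⟩ := exists_covBy_between (bot_lt_iff_ne_bot.mpr hJbot)
  have huniq : ∀ R', R' ⋖ J → R' = R := by
    intro R' hR'
    by_contra hne
    have hsup : R' ⊔ R = J :=
      JordanHolderLattice.sup_eq_of_isMaximal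
        (show JordanHolderLattice.IsMaximal R' J from hR')
        (show JordanHolderLattice.IsMaximal R J from hR) hne
    obtain ⟨hcov, ⟨g⟩⟩ := down_move hR' hsup
    exact mf_pair hMF hcov hR (le_refl R)
      ⟨(g.symm.trans (hb R' hR').some).trans (hb R hR).some.symm⟩
  refine ⟨J, ⟨hJbot, R, hR, huniq⟩, ?_⟩
  have hrad : radOf J = R := radOf_eq_of_unique hR huniq
  obtain ⟨g1⟩ := hb R hR
  obtain ⟨g2⟩ := top_iso (A := A) (M := M) hrad
  exact ⟨g1.symm.trans g2.symm⟩
lemma occ_in_series [IsNoetherian A M] [IsArtinian A M]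
    (s : CompositionSeries (Submodule A M)) (hsh : s.head = ⊥) (hsl : s.last = ⊤)
    {R J : Submodule A M} (hRJ : R ⋖ J) :
    ∃ i : Fin s.length, Nonempty (csFactor s i ≃ₗ[A] qF R J) := by
  obtain ⟨t1, ht1h, ht1l⟩ := exists_cs_between (X := (⊥ : Submodule A M)) (Y := R) bot_le
  obtain ⟨t2, ht2h, ht2l⟩ := exists_cs_between (X := J) (Y := (⊤ : Submodule A M)) le_top
  have c : JordanHolderLattice.IsMaximal t1.last t2.head := by rw [ht1l, ht2h]; exact hRJ
  set t : CompositionSeries (Submodule A M) := t1.append t2 c with htdef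
  have hth : t.head = ⊥ := by rw [RelSeries.head_append, ht1h]
  have htl : t.last = ⊤ := by rw [RelSeries.last_append, ht2l]
  have hRt : R ∈ t := mem_append_left (ht1l ▸ t1.last_mem)
  have hJt : J ∈ t := mem_append_right (ht2h ▸ t2.head_mem)
  obtain ⟨i0, hi1, hi2⟩ := mem_pair hRJ hRt hJt
  obtain ⟨f, hf⟩ := CompositionSeries.jordan_holder t s (by rw [hth, hsh]) (by rw [htl, hsl])
  obtain g := (hf i0).linearEquiv
  obtain ⟨g0⟩ := qF_congr (A := A) hi1 hi2
  exact ⟨f i0, ⟨g.symm.trans g0⟩⟩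
lemma topQuot_congr {J J' : Submodule A M} (h : J = J') :
    Nonempty (topQuot J ≃ₗ[A] topQuot J') := by subst h; exact ⟨LinearEquiv.refl _ _⟩

/-- For a multiplicity-free module of finite length, `J ↦ J/rad(J)` is a bijection
between local submodules and (isomorphism classes of) composition factors;
in particular the composition length equals the number of local submodules. -/
theorem local_submodules_biject_with_factors
    [IsNoetherian A M] [IsArtinian A M] (hMF : MultFree A M) :
    (∀ J J' : Submodule A M, IsLocalSub J → IsLocalSub J' →
        Nonempty (topQuot J ≃ₗ[A] topQuot J') → J = J') ∧
    (∀ s : CompositionSeries (Submodule A M), s.head = ⊥ → s.last = ⊤ →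
        (∀ i : Fin s.length, ∃ J : Submodule A M, IsLocalSub J ∧
            Nonempty (csFactor s i ≃ₗ[A] topQuot J)) ∧
        (∀ J : Submodule A M, IsLocalSub J →
            ∃ i : Fin s.length, Nonempty (csFactor s i ≃ₗ[A] topQuot J)) ∧
        s.length = Nat.card {J : Submodule A M // IsLocalSub J}) := by
  refine ⟨fun J J' hJ hJ' hiso => local_inj hMF hJ hJ' hiso, fun s hsh hsl => ?_⟩
  have ha : ∀ i : Fin s.length, ∃ J : Submodule A M, IsLocalSub J ∧
      Nonempty (csFactor s i ≃ₗ[A] topQuot J) := by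
    intro i
    obtain ⟨J, hJ, hiso⟩ := exists_local_of_occ hMF
      (show s i.castSucc ⋖ s i.succ from s.step i)
    exact ⟨J, hJ, hiso⟩
  have hb : ∀ J : Submodule A M, IsLocalSub J →
      ∃ i : Fin s.length, Nonempty (csFactor s i ≃ₗ[A] topQuot J) := by
    intro J hJ
    obtain ⟨R, hR, hrad, -⟩ := localStruct hJ
    obtain ⟨i, ⟨g⟩⟩ := occ_in_series s hsh hsl hR
    obtain ⟨g2⟩ := top_iso (A := A) (M := M) hrad
    exact ⟨i, ⟨g.trans g2.symm⟩⟩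
  refine ⟨ha, hb, ?_⟩
  choose F hF1 hF2 using ha
  set f : Fin s.length → {J : Submodule A M // IsLocalSub J} := fun i => ⟨F i, hF1 i⟩ with hf
  have hinj : Function.Injective f := by
    intro i j hij
    have hFij : F i = F j := congrArg Subtype.val hij
    obtain ⟨e1⟩ := hF2 i
    obtain ⟨e2⟩ := hF2 j
    obtain ⟨e3⟩ := topQuot_congr (A := A) hFij
    exact hMF s hsh hsl i j ⟨(e1.trans e3).trans e2.symm⟩
  have hsurj : Function.Surjective f := by
    rintro ⟨J, hJ⟩
    obtain ⟨i, ⟨g⟩⟩ := hb J hJ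
    refine ⟨i, Subtype.ext ?_⟩
    obtain ⟨e1⟩ := hF2 i
    exact local_inj hMF (hF1 i) hJ ⟨e1.symm.trans g⟩
  have e : Fin s.length ≃ {J : Submodule A M // IsLocalSub J} :=
    Equiv.ofBijective f ⟨hinj, hsurj⟩
  exact (Nat.card_eq_of_equiv_fin e.symm).symm
end
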